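/- Let K be a finite lattice-convex subset of ℤ² whose affine hull is all of ℝ², put m := m(K) and δ := δ(K), and assume m ≥ δ² + δ + 1. Then there exists a positive integer n with δ ≤ n ≤ (m − 1)/δ such that: whenever u, v, w are mutually nonparallel vectors that either all belong to U(K) ∪ U(−K), or are all primitive vectors parallel to edges of the convex hull of K, one has n·u = α v + β w for real numbers α, β satisfying 1 ≤ |α| ≤ m − 1 and 1 ≤ |β| ≤ m − 1. -/

import Mathlib

open scoped Pointwise ENNReal

noncomputable section

abbrev Z2 : Type := ℤ × ℤ
abbrev R2 : Type := ℝ × ℝ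

/-- The canonical embedding of `ℤ²` into `ℝ²`. -/
def toR (p : Z2) : R2 := ((p.1 : ℝ), (p.2 : ℝ))

/-- The standard scalar product on `ℝ²`. -/
def dotR (x y : R2) : ℝ := x.1 * y.1 + x.2 * y.2

/-- The covariogram of a set `K ⊆ ℤ²`: `u ↦ |K ∩ (K + u)|`. -/
def cov (K : Set Z2) (u : Z2) : ℕ := (K ∩ ((fun x => x + u) '' K)).ncard

/-- `K ⊆ ℤ²` is lattice-convex if it is the intersection of `ℤ²` with a convex set. -/
def latticeConvex (K : Set Z2) : Prop := ∃ C : Set R2, Convex ℝ C ∧ K = toR ⁻¹' C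

/-- The affine hull of `K` is all of `ℝ²`. -/
def spans (K : Set Z2) : Prop := affineSpan ℝ (toR '' K) = ⊤

/-- `L ∈ [K]`: `L` is a translate of `K` or a translate of `−K`. -/
def sameClass (K L : Set Z2) : Prop :=
  ∃ t : Z2, L = (fun x => x + t) '' K ∨ L = (fun x => t - x) '' K

/-- The support set `F(K,u)` of `K` in direction `u ∈ ℝ²`. -/
def suppSet (K : Set Z2) (u : R2) : Set Z2 :=
  {x ∈ K | ∀ y ∈ K, dotR (toR y) u ≤ dotR (toR x) u}

/-- A vector of `ℤ²` is primitive if the gcd of its coordinates is `1`. -/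
def primitive (u : Z2) : Prop := Int.gcd u.1 u.2 = 1

/-- `u ≠ 0` is an outer normal of an edge of `K` if `F(K,u)` has more than one point. -/
def isEdge (K : Set Z2) (u : Z2) : Prop := u ≠ 0 ∧ 1 < (suppSet K (toR u)).ncard

/-- `U(K)`: primitive outer normals of edges of `K`. -/
def normals (K : Set Z2) : Set Z2 := {u | primitive u ∧ isEdge K u}

/-- `−K`. -/
def negSet (K : Set Z2) : Set Z2 := (fun x => -x) '' K

/-- `m'(K) = min {|F(K,u)| : u ∈ U(K)}` (with `min ∅ = ∞`). -/
def mOne (K : Set Z2) : ℝ≥0∞ := ⨅ u ∈ normals K, ((suppSet K (toR u)).ncard : ℝ≥0∞)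

/-- `m''(K) = min {|F(K,u)| − |F(K,−u)| + 1 : u ≠ 0, |F(K,u)| > |F(K,−u)| > 1}`. -/
def mTwo (K : Set Z2) : ℝ≥0∞ :=
  ⨅ u ∈ {u : Z2 | u ≠ 0 ∧ 1 < (suppSet K (toR (-u))).ncard ∧
      (suppSet K (toR (-u))).ncard < (suppSet K (toR u)).ncard},
    (((suppSet K (toR u)).ncard - (suppSet K (toR (-u))).ncard + 1 : ℕ) : ℝ≥0∞)

/-- `m(K) = min {m'(K), m''(K)}`. -/
def mm (K : Set Z2) : ℝ≥0∞ := min (mOne K) (mTwo K)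

/-- Determinant of the 2×2 matrix with columns `u`, `v`. -/
def detZ (u v : Z2) : ℤ := u.1 * v.2 - u.2 * v.1

/-- `D(U) = {|det(u₁,u₂)| : u₁, u₂ ∈ U} \ {0}`. -/
def Dset (U : Set Z2) : Set ℝ≥0∞ :=
  {d | d ≠ 0 ∧ ∃ u ∈ U, ∃ v ∈ U, d = ((detZ u v).natAbs : ℝ≥0∞)}

/-- The discrepancy `δ(U) = max D(U) / min D(U)`. -/
def disc (U : Set Z2) : ℝ≥0∞ := sSup (Dset U) / sInf (Dset U)

/-- `δ(K) = δ(U(K))`. -/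
def discK (K : Set Z2) : ℝ≥0∞ := disc (normals K)

/-- Two vectors of `ℝ²` are parallel (linearly dependent). -/
def Parallel2 (x w : R2) : Prop := x.1 * w.2 = x.2 * w.1

/-- Two vectors of `ℤ²` are parallel (linearly dependent). -/
def ParallelZ (u v : Z2) : Prop := u.1 * v.2 = u.2 * v.1

/-- A polyhedron in `ℝ²`: an intersection of finitely many closed halfplanes. -/
def IsPolyhedron (P : Set R2) : Prop :=
  ∃ H : Finset (R2 × ℝ), P = ⋂ h ∈ H, {x : R2 | dotR x h.1 ≤ h.2}

/-- `E` is an edge (one-dimensional face) of the polyhedron `P`: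
a convex extreme subset of `P` with at least two points that is contained in a line. -/
def IsPolyEdge (P E : Set R2) : Prop :=
  IsExtreme ℝ P E ∧ Convex ℝ E ∧ (∃ p ∈ E, ∃ q ∈ E, p ≠ q) ∧
    ∃ a d : R2, ∀ x ∈ E, ∃ t : ℝ, x = a + t • d

/-- Every edge of `P` is parallel to some vector of `W`. -/
def edgesParallelTo (P : Set R2) (W : Set Z2) : Prop :=
  ∀ E : Set R2, IsPolyEdge P E → ∃ w ∈ W, ∀ p ∈ E, ∀ q ∈ E, Parallel2 (p - q) (toR w)

/-- `u` is parallel to an edge of the convex hull of `K`. -/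
def parEdgeHull (K : Set Z2) (u : Z2) : Prop :=
  ∃ E : Set R2, IsPolyEdge (convexHull ℝ (toR '' K)) E ∧
    ∀ p ∈ E, ∀ q ∈ E, Parallel2 (p - q) (toR u)

/-- The conical hull of a set in `ℝ²`. -/
def coneHull (s : Set R2) : Set R2 :=
  {x | ∃ c : ℝ, 0 ≤ c ∧ ∃ y ∈ convexHull ℝ s, x = c • y}

/-- The supporting cone `S(K,v) = cone (K − v)`. -/
def suppCone (K : Set Z2) (v : Z2) : Set R2 :=
  coneHull ((fun x => toR x - toR v) '' K)

/-- `v` is a vertex of `K`: a support set of `K` consisting of exactly one point. -/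
def isVertex (K : Set Z2) (v : Z2) : Prop := ∃ u : R2, u ≠ 0 ∧ suppSet K u = {v}

/-- A set is centrally symmetric if it is a translate of its reflection. -/
def centSym (A : Set Z2) : Prop := ∃ t : Z2, A = (fun x => t - x) '' A

/-- The Minkowski sum of `S` and `T` is direct. -/
def directSum (S T : Set Z2) : Prop :=
  ∀ s ∈ S, ∀ s' ∈ S, ∀ t ∈ T, ∀ t' ∈ T, s + t = s' + t' → s = s' ∧ t = t'

/-- `T₁ = {0,…,k} × {0}`. -/
def T1set (k : ℤ) : Set Z2 := {p | 0 ≤ p.1 ∧ p.1 ≤ k ∧ p.2 = 0}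

/-- `T₂ = {0,…,ℓ} × {1}`. -/
def T2set (l : ℤ) : Set Z2 := {p | 0 ≤ p.1 ∧ p.1 ≤ l ∧ p.2 = 1}

/-- `T = ({0,…,k} × {0}) ∪ ({0,…,ℓ} × {1})`. -/
def Tset (k l : ℤ) : Set Z2 := T1set k ∪ T2set l

def wOne (k : ℤ) : Z2 := (-k - 1, 1)
def wTwo (l : ℤ) : Z2 := (l + 1, 1)

/-- The lattice `𝕃 = ℤw₁ + ℤw₂`. -/
def ZLat (k l : ℤ) : Set Z2 := {p | ∃ a b : ℤ, p = a • wOne k + b • wTwo l}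

/-- `S` is lattice-convex with respect to the lattice `Λ`. -/
def latticeConvexIn (Λ S : Set Z2) : Prop := ∃ C : Set R2, Convex ℝ C ∧ S = Λ ∩ toR ⁻¹' C

/-- The translate `s + A`. -/
def transl (s : Z2) (A : Set Z2) : Set Z2 := (fun x => s + x) '' A

/-- The horizontal section `I_h` of `K` at height `h`. -/
def sect (K : Set Z2) (h : ℤ) : Set Z2 := {p ∈ K | p.2 = h}

/-- `𝒯(h)`: the members of `𝒯₁ ∪ 𝒯₂` contained in `I_h`. -/
def TcalSet (k l : ℤ) (S : Set Z2) (h : ℤ) : Set (Set Z2) :=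
  {J | (∃ s ∈ S, J = transl s (T1set k) ∨ J = transl s (T2set l)) ∧ J ⊆ sect (S + Tset k l) h}

/-- `J` strictly precedes `J'` in the left-to-right order. -/
def precedes (J J' : Set Z2) : Prop := ∀ p ∈ J, ∀ q ∈ J', p.1 < q.1

/-- Adjacency in the graph `G_S`. -/
def adjStep (k l : ℤ) (S : Set Z2) (a b : Z2) : Prop :=
  a ∈ S ∧ b ∈ S ∧
    (b - a = wOne k ∨ b - a = -(wOne k) ∨ b - a = wTwo l ∨ b - a = -(wTwo l) ∨
      (k = l + 1 ∧ (b - a = wOne k + wTwo l ∨ b - a = -(wOne k + wTwo l))))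

/-- The graph `G_S` is connected. -/
def GConnected (k l : ℤ) (S : Set Z2) : Prop :=
  ∀ s ∈ S, ∀ s' ∈ S, Relation.ReflTransGen (adjStep k l S) s s'

end
section Aux
open Set

lemma toR_inj : Function.Injective toR := by
  intro a b h
  have h1 := congrArg Prod.fst h
  have h2 := congrArg Prod.snd h
  simp [toR] at h1 h2
  exact Prod.ext h1 h2

def rotZ (u : Z2) : Z2 := (-u.2, u.1)

lemma detZ_rotZ (u v : Z2) : detZ (rotZ u) (rotZ v) = detZ u v := by
  simp [detZ, rotZ]; ring

lemma detZ_neg_left (u v : Z2) : detZ (-u) v = -(detZ u v) := by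
  simp [detZ]; ring

lemma detZ_neg_right (u v : Z2) : detZ u (-v) = -(detZ u v) := by
  simp [detZ]; ring

lemma detZ_swap (u v : Z2) : detZ v u = -(detZ u v) := by
  simp [detZ]; ring

lemma parallelZ_iff {u v : Z2} : ParallelZ u v ↔ detZ u v = 0 := by
  simp [ParallelZ, detZ, sub_eq_zero]

lemma primitive_neg {u : Z2} (h : primitive u) : primitive (-u) := by
  simpa [primitive, Int.gcd] using h

lemma primitive_rotZ {u : Z2} (h : primitive u) : primitive (rotZ u) := by
  simp only [primitive, rotZ, Int.gcd] at h ⊢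
  simpa [Nat.gcd_comm] using h

lemma primitive_ne_zero {u : Z2} (h : primitive u) : u ≠ 0 := by
  rintro rfl
  simp [primitive] at h

end Aux
section Aux2
open Set

lemma toR_neg (p : Z2) : toR (-p) = -toR p := by simp [toR]

lemma suppSet_negSet (K : Set Z2) (u : Z2) :
    suppSet (negSet K) (toR u) = (fun x : Z2 => -x) '' (suppSet K (toR (-u))) := by
  have key : ∀ x u : Z2, dotR (toR x) (toR u) = ((x.1 * u.1 + x.2 * u.2 : ℤ) : ℝ) := by
    intro x u; simp [dotR, toR]
  ext x
  simp only [suppSet, negSet, Set.mem_setOf_eq, Set.mem_image]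
  constructor
  · rintro ⟨⟨x', hx', rfl⟩, hmax⟩
    refine ⟨x', ⟨hx', fun y hy => ?_⟩, rfl⟩
    have h := hmax (-y) ⟨y, hy, rfl⟩
    rw [key, key] at h ⊢
    rw [Int.cast_le] at h ⊢
    simp only [Prod.fst_neg, Prod.snd_neg] at *
    nlinarith [h]
  · rintro ⟨x', ⟨hx', hmax⟩, rfl⟩
    refine ⟨⟨x', hx', rfl⟩, ?_⟩
    rintro y ⟨y', hy', rfl⟩
    have h := hmax y' hy'
    rw [key, key] at h ⊢
    rw [Int.cast_le] at h ⊢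
    simp only [Prod.fst_neg, Prod.snd_neg] at *
    nlinarith [h]

lemma normals_negSet {K : Set Z2} {u : Z2} (h : u ∈ normals (negSet K)) :
    -u ∈ normals K := by
  obtain ⟨hprim, hne, hcard⟩ := h
  refine ⟨primitive_neg hprim, neg_ne_zero.2 hne, ?_⟩
  rw [suppSet_negSet] at hcard
  rwa [Set.ncard_image_of_injective _ neg_injective] at hcard

lemma mm_ge_two (K : Set Z2) : 2 ≤ mm K := by
  refine le_min ?_ ?_
  · refine le_iInf₂ fun u hu => ?_
    have h : 2 ≤ (suppSet K (toR u)).ncard := hu.2.2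
    exact_mod_cast h
  · refine le_iInf₂ fun u hu => ?_
    obtain ⟨-, h1, h2⟩ := hu
    have h : 2 ≤ (suppSet K (toR u)).ncard - (suppSet K (toR (-u))).ncard + 1 := by omega
    exact_mod_cast h

end Aux2
section Aux3
open Set

/-- normalize an integer vector by dividing by its gcd -/
def primOf (e : Z2) : Z2 := (e.1 / (Int.gcd e.1 e.2 : ℤ), e.2 / (Int.gcd e.1 e.2 : ℤ))

lemma exists_mul_of_parallel {u e : Z2} (hu : primitive u) (hpar : u.1 * e.2 = u.2 * e.1) :
    ∃ m : ℤ, e.1 = m * u.1 ∧ e.2 = m * u.2 := by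
  by_cases h1 : u.1 = 0
  · have h2 : u.2 = 1 ∨ u.2 = -1 := by
      have : u.2.natAbs = 1 := by simpa [primitive, Int.gcd, h1] using hu
      rcases Int.natAbs_eq u.2 with h | h <;> omega
    have he1 : e.1 = 0 := by
      rw [h1] at hpar
      rcases h2 with h | h <;> (rw [h] at hpar; omega)
    refine ⟨e.2 * u.2, by rw [h1, he1]; ring, ?_⟩
    rcases h2 with h | h <;> (rw [h]; ring)
  · have hcop : IsCoprime u.1 u.2 := Int.isCoprime_iff_gcd_eq_one.2 hu
    have hdvd : u.1 ∣ e.1 := hcop.dvd_of_dvd_mul_left ⟨e.2, by linarith [hpar]⟩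
    obtain ⟨m, hm⟩ := hdvd
    refine ⟨m, by rw [hm]; ring, ?_⟩
    have : u.1 * e.2 = u.1 * (m * u.2) := by rw [hpar, hm]; ring
    exact mul_left_cancel₀ h1 this

lemma primitive_parallel_pm {u e : Z2} (hu : primitive u) (he : e ≠ 0)
    (hpar : u.1 * e.2 = u.2 * e.1) : u = primOf e ∨ u = -primOf e := by
  obtain ⟨m, hm1, hm2⟩ := exists_mul_of_parallel hu hpar
  have hm0 : m ≠ 0 := by
    rintro rfl
    exact he (Prod.ext (by simp [hm1]) (by simp [hm2]))
  have hgcd : (Int.gcd e.1 e.2 : ℤ) = (m.natAbs : ℤ) := by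
    rw [hm1, hm2, Int.gcd_mul_left]
    have h : Int.gcd u.1 u.2 = 1 := hu
    simp [h]
  have hn0 : (m.natAbs : ℤ) ≠ 0 := by omega
  rcases Int.natAbs_eq m with h | h
  · left
    have habs : (m.natAbs : ℤ) = m := by omega
    have hm1' : e.1 = (m.natAbs : ℤ) * u.1 := by rw [habs, hm1]
    have hm2' : e.2 = (m.natAbs : ℤ) * u.2 := by rw [habs, hm2]
    have c1 : e.1 / (Int.gcd e.1 e.2 : ℤ) = u.1 := by
      rw [hgcd, hm1', Int.mul_ediv_cancel_left _ hn0]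
    have c2 : e.2 / (Int.gcd e.1 e.2 : ℤ) = u.2 := by
      rw [hgcd, hm2', Int.mul_ediv_cancel_left _ hn0]
    exact Prod.ext c1.symm c2.symm
  · right
    have habs : (m.natAbs : ℤ) = -m := by omega
    have hm1' : e.1 = (m.natAbs : ℤ) * (-u.1) := by rw [habs, hm1]; ring
    have hm2' : e.2 = (m.natAbs : ℤ) * (-u.2) := by rw [habs, hm2]; ring
    have c1 : e.1 / (Int.gcd e.1 e.2 : ℤ) = -u.1 := by
      rw [hgcd, hm1', Int.mul_ediv_cancel_left _ hn0]
    have c2 : e.2 / (Int.gcd e.1 e.2 : ℤ) = -u.2 := by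
      rw [hgcd, hm2', Int.mul_ediv_cancel_left _ hn0]
    refine Prod.ext ?_ ?_ <;> simp [primOf, c1, c2]

lemma suppSet_pair {K : Set Z2} (hKfin : K.Finite) {u : Z2} (h : 1 < (suppSet K (toR u)).ncard) :
    ∃ p ∈ K, ∃ q ∈ K, p ≠ q ∧ u.1 * (p - q).1 + u.2 * (p - q).2 = 0 := by
  have hsub : suppSet K (toR u) ⊆ K := fun x hx => hx.1
  have hfin : (suppSet K (toR u)).Finite := hKfin.subset hsub
  obtain ⟨p, q, hp, hq, hpq⟩ := (Set.one_lt_ncard_iff hfin).1 h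
  refine ⟨p, hsub hp, q, hsub hq, hpq, ?_⟩
  have h1 := hp.2 q hq.1
  have h2 := hq.2 p hp.1
  have key : ∀ x v : Z2, dotR (toR x) (toR v) = ((x.1 * v.1 + x.2 * v.2 : ℤ) : ℝ) := by
    intro x v; simp [dotR, toR]
  rw [key, key] at h1 h2
  rw [Int.cast_le] at h1 h2
  have heq : p.1 * u.1 + p.2 * u.2 = q.1 * u.1 + q.2 * u.2 := le_antisymm h2 h1
  simp only [Prod.fst_sub, Prod.snd_sub]
  linear_combination heq

lemma normals_finite {K : Set Z2} (hKfin : K.Finite) : (normals K).Finite := by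
  have hsub : normals K ⊆
      (fun pq : Z2 × Z2 => primOf (rotZ (pq.1 - pq.2))) '' (K ×ˢ K) ∪
      (fun pq : Z2 × Z2 => -primOf (rotZ (pq.1 - pq.2))) '' (K ×ˢ K) := by
    rintro u ⟨hprim, hne, hcard⟩
    obtain ⟨p, hp, q, hq, hpq, hdot⟩ := suppSet_pair hKfin hcard
    have hez : rotZ (p - q) ≠ 0 := by
      intro h
      rw [Prod.ext_iff] at h
      simp only [rotZ, Prod.fst_zero, Prod.snd_zero, neg_eq_zero, Prod.fst_sub, Prod.snd_sub] at h
      exact hpq (Prod.ext (by omega) (by omega))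
    have hpar : u.1 * (rotZ (p - q)).2 = u.2 * (rotZ (p - q)).1 := by
      simp only [rotZ]
      linear_combination hdot
    rcases primitive_parallel_pm hprim hez hpar with h | h
    · exact Or.inl ⟨(p, q), ⟨hp, hq⟩, h.symm⟩
    · exact Or.inr ⟨(p, q), ⟨hp, hq⟩, by rw [h]⟩
  exact Set.Finite.subset (((hKfin.prod hKfin).image _).union ((hKfin.prod hKfin).image _)) hsub

end Aux3
section Aux4
open Set

lemma mem_hull_level {V : Set R2} (hVfin : V.Finite) {g : R2} {c : ℝ}
    (hb : ∀ v ∈ V, dotR v g ≤ c) {x : R2} (hx : x ∈ convexHull ℝ V)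
    (hxc : dotR x g = c) : x ∈ convexHull ℝ {v | v ∈ V ∧ dotR v g = c} := by
  classical
  rw [← hVfin.coe_toFinset, Finset.convexHull_eq] at hx
  obtain ⟨wt, hw0, hw1, hwc⟩ := hx
  set t := hVfin.toFinset with ht
  rw [Finset.centerMass_eq_of_sum_1 _ _ hw1] at hwc
  have hdot : dotR (∑ v ∈ t, wt v • v) g = ∑ v ∈ t, wt v * dotR v g := by
    simp only [dotR, Prod.fst_sum, Prod.snd_sum, Prod.smul_fst, Prod.smul_snd, smul_eq_mul,
      Finset.sum_mul]
    rw [← Finset.sum_add_distrib]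
    congr 1; funext v; ring
  have hsum : ∑ v ∈ t, wt v * dotR v g = c := by
    rw [← hdot]; simp only [id] at hwc; rw [hwc, hxc]
  have hzero : ∑ v ∈ t, wt v * (c - dotR v g) = 0 := by
    have h2 : ∑ v ∈ t, wt v * (c - dotR v g)
        = (∑ v ∈ t, wt v) * c - ∑ v ∈ t, wt v * dotR v g := by
      rw [Finset.sum_mul, ← Finset.sum_sub_distrib]
      congr 1; funext v; ring
    rw [h2, hw1, hsum]; ring
  have hmemV : ∀ v ∈ t, v ∈ V := fun v hv => by rwa [ht, Set.Finite.mem_toFinset] at hv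
  have hkey : ∀ v ∈ t, wt v ≠ 0 → dotR v g = c := by
    intro v hv hvne
    have hterm := (Finset.sum_eq_zero_iff_of_nonneg
      (fun i hi => mul_nonneg (hw0 i hi) (by linarith [hb i (hmemV i hi)]))).1 hzero v hv
    rcases mul_eq_zero.1 hterm with h | h
    · exact absurd h hvne
    · linarith [hb v (hmemV v hv)]
  have hx' : x = (t.filter (fun v => wt v ≠ 0)).centerMass wt id := by
    rw [Finset.centerMass_filter_ne_zero, Finset.centerMass_eq_of_sum_1 _ _ hw1]
    simp only [id] at hwc ⊢
    rw [hwc]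
  rw [hx']
  refine Finset.centerMass_mem_convexHull _ (fun i hi => hw0 i (Finset.mem_filter.1 hi).1) ?_ ?_
  · rw [Finset.sum_filter_ne_zero, hw1]; norm_num
  · intro i hi
    obtain ⟨hit, hiw⟩ := Finset.mem_filter.1 hi
    exact ⟨hmemV i hit, hkey i hit hiw⟩

lemma level_two_points {K : Set Z2} (hKfin : K.Finite) {w : Z2} (hw : primitive w)
    {p q z : R2} (hpP : p ∈ convexHull ℝ (toR '' K)) (hqP : q ∈ convexHull ℝ (toR '' K))
    (hpq : p ≠ q)
    (hb : ∀ x ∈ convexHull ℝ (toR '' K), dotR x (toR w) ≤ dotR z (toR w))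
    (hpz : dotR p (toR w) = dotR z (toR w)) (hqz : dotR q (toR w) = dotR z (toR w)) :
    w ∈ normals K := by
  classical
  have hVfin : (toR '' K).Finite := hKfin.image _
  have hbV : ∀ v ∈ toR '' K, dotR v (toR w) ≤ dotR z (toR w) := fun v hv =>
    hb v (subset_convexHull ℝ _ hv)
  have hp' := mem_hull_level hVfin hbV hpP hpz
  have hq' := mem_hull_level hVfin hbV hqP hqz
  set S := {v | v ∈ toR '' K ∧ dotR v (toR w) = dotR z (toR w)} with hS
  have hSne2 : ∃ a ∈ S, ∃ b ∈ S, a ≠ b := by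
    by_contra hcon
    push_neg at hcon
    have hsub : S.Subsingleton := fun a ha b hb => hcon a ha b hb
    rcases hsub.eq_empty_or_singleton with h | ⟨v, h⟩
    · rw [h, convexHull_empty] at hp'
      exact hp'
    · rw [h, convexHull_singleton] at hp' hq'
      exact hpq (hp'.trans hq'.symm)
  obtain ⟨a, ⟨⟨xa, hxa, rfl⟩, hca⟩, b, ⟨⟨xb, hxb, rfl⟩, hcb⟩, hab⟩ := hSne2
  refine ⟨hw, primitive_ne_zero hw, ?_⟩
  rw [Set.one_lt_ncard_iff (hKfin.subset (fun y (hy : y ∈ suppSet K (toR w)) => hy.1))]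
  refine ⟨xa, xb, ⟨hxa, fun y hy => ?_⟩, ⟨hxb, fun y hy => ?_⟩,
    fun h => hab (by rw [h])⟩
  · rw [hca]; exact hbV _ ⟨y, hy, rfl⟩
  · rw [hcb]; exact hbV _ ⟨y, hy, rfl⟩

end Aux4
section Aux5
open Set Filter

lemma dotR_int (x v : Z2) : dotR (toR x) (toR v) = ((x.1 * v.1 + x.2 * v.2 : ℤ) : ℝ) := by
  simp [dotR, toR]

lemma dot_rot_eq_zero {d : R2} {u : Z2} (h : Parallel2 d (toR u)) :
    dotR d (toR (rotZ u)) = 0 := by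
  simp only [Parallel2, dotR, toR, rotZ] at *
  push_cast
  linear_combination -h

lemma hull_edge_normal {K : Set Z2} (hKfin : K.Finite) (hKspan : spans K) {u : Z2}
    (hu : primitive u) (hpe : parEdgeHull K u) :
    rotZ u ∈ normals K ∨ -rotZ u ∈ normals K := by
  classical
  obtain ⟨E, ⟨hext, hconv, ⟨p, hp, q, hq, hpq⟩, -⟩, hpar⟩ := hpe
  set V : Set R2 := toR '' K with hVdef
  set P : Set R2 := convexHull ℝ V with hPdef
  have hPconv : Convex ℝ P := convex_convexHull ℝ V
  have hIntNe : (interior P).Nonempty := by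
    rw [hPconv.interior_nonempty_iff_affineSpan_eq_top, hPdef, affineSpan_convexHull]
    exact hKspan
  have hEP : E ⊆ P := hext.1
  have hune : u ≠ 0 := primitive_ne_zero hu
  have huor : u.1 ≠ 0 ∨ u.2 ≠ 0 := by
    by_contra hc
    push_neg at hc
    exact hune (Prod.ext hc.1 hc.2)
  have huR2 : (0:ℝ) < (u.1 : ℝ)^2 + (u.2 : ℝ)^2 := by
    rcases huor with h | h
    · have : (u.1:ℝ) ≠ 0 := Int.cast_ne_zero.2 h
      positivity
    · have : (u.2:ℝ) ≠ 0 := Int.cast_ne_zero.2 h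
      positivity
  set z : R2 := (1/2 : ℝ) • p + (1/2 : ℝ) • q with hzdef
  have hzE : z ∈ E := hconv hp hq (by norm_num) (by norm_num) (by norm_num)
  -- z is not in the interior of P
  have hzNI : z ∉ interior P := by
    intro hzi
    obtain ⟨ε, hε, hball⟩ := Metric.isOpen_iff.1 isOpen_interior z hzi
    set wv : R2 := toR (rotZ u) with hwvdef
    have hwvne : wv ≠ 0 := by
      intro h
      have h1 := congrArg Prod.fst h
      have h2 := congrArg Prod.snd h
      simp only [hwvdef, toR, rotZ, Prod.fst_zero, Prod.snd_zero, neg_eq_zero,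
        Int.cast_eq_zero] at h1 h2
      exact hune (Prod.ext h2 (by exact_mod_cast h1))
    have hnwv : (0:ℝ) < ‖wv‖ := norm_pos_iff.2 hwvne
    set d : ℝ := ε / (2 * ‖wv‖) with hddef
    have hd0 : 0 < d := by positivity
    have hdist : ∀ s : R2, dist (z + s) z = ‖s‖ := by
      intro s
      rw [dist_eq_norm]
      simp
    have hmem1 : z + d • wv ∈ P := by
      apply interior_subset
      apply hball
      rw [Metric.mem_ball, hdist, norm_smul, Real.norm_eq_abs, abs_of_pos hd0, hddef]
      rw [div_mul_eq_mul_div]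
      rw [div_lt_iff₀ (by positivity)]
      nlinarith
    have hmem2 : z + (-d) • wv ∈ P := by
      apply interior_subset
      apply hball
      rw [Metric.mem_ball, hdist, norm_smul, Real.norm_eq_abs, abs_of_neg (by linarith), hddef]
      rw [neg_neg, div_mul_eq_mul_div, div_lt_iff₀ (by positivity)]
      nlinarith
    have hseg : z ∈ openSegment ℝ (z + d • wv) (z + (-d) • wv) := by
      refine ⟨1/2, 1/2, by norm_num, by norm_num, by norm_num, ?_⟩
      module
    have hEmem := hext.2 hmem1 hmem2 hzE hseg
    have hparx := hpar _ hEmem _ hzE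
    have : (z + d • wv - z) = d • wv := by module
    rw [this] at hparx
    simp only [Parallel2, hwvdef, toR, rotZ, Prod.smul_fst, Prod.smul_snd, smul_eq_mul] at hparx
    push_cast at hparx
    nlinarith [hparx, huR2, hd0]
  -- supporting functional
  obtain ⟨f, hf⟩ := geometric_hahn_banach_open_point hPconv.interior isOpen_interior hzNI
  have hfP : ∀ x ∈ P, f x ≤ f z := by
    intro x hx
    obtain ⟨x₀, hx₀⟩ := hIntNe
    have hlim : Tendsto (fun t : ℝ => f (t • x₀ + (1 - t) • x)) (nhdsWithin 0 (Set.Ioi 0))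
        (nhds (f x)) := by
      have hc0 : Continuous fun t : ℝ => t • x₀ + (1 - t) • x :=
        (continuous_id.smul continuous_const).add
          ((continuous_const.sub continuous_id).smul continuous_const)
      have hc : Continuous fun t : ℝ => f (t • x₀ + (1 - t) • x) := f.continuous.comp hc0
      have h0 := hc.tendsto 0
      simp only [zero_smul, sub_zero, one_smul, zero_add] at h0
      exact h0.mono_left nhdsWithin_le_nhds
    refine le_of_tendsto hlim ?_
    filter_upwards [Ioo_mem_nhdsGT_of_mem (show (0:ℝ) ∈ Set.Ico 0 1 by norm_num)] with t ht
    exact (hf _ (hPconv.combo_interior_closure_mem_interior hx₀ (subset_closure hx) ht.1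
      (by linarith [ht.2]) (by ring))).le
  set g1 : ℝ := f (1, 0) with hg1def
  set g2 : ℝ := f (0, 1) with hg2def
  have hfeq : ∀ x : R2, f x = x.1 * g1 + x.2 * g2 := by
    intro x
    have hxd : x = x.1 • ((1:ℝ), (0:ℝ)) + x.2 • ((0:ℝ), (1:ℝ)) := by
      ext <;> simp
    calc f x = f (x.1 • ((1:ℝ), (0:ℝ)) + x.2 • ((0:ℝ), (1:ℝ))) := by rw [← hxd]
      _ = x.1 * g1 + x.2 * g2 := by
          rw [map_add, map_smul, map_smul, smul_eq_mul, smul_eq_mul]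
  have hgne : g1 ≠ 0 ∨ g2 ≠ 0 := by
    by_contra hc
    push_neg at hc
    obtain ⟨x₀, hx₀⟩ := hIntNe
    have h1 := hf x₀ hx₀
    rw [hfeq x₀, hfeq z, hc.1, hc.2] at h1
    simp at h1
  -- p and q are at the same level as z
  have hfp : f p = f z ∧ f q = f z := by
    have h1 : f p ≤ f z := hfP p (hEP hp)
    have h2 : f q ≤ f z := hfP q (hEP hq)
    have h3 : f z = (1/2 : ℝ) * f p + (1/2 : ℝ) * f q := by
      rw [hzdef, map_add, map_smul, map_smul, smul_eq_mul, smul_eq_mul]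
    constructor <;> linarith
  have hpq' : (p.1 - q.1) * (u.2 : ℝ) = (p.2 - q.2) * (u.1 : ℝ) := by
    have := hpar p hp q hq
    simpa [Parallel2, toR, Prod.fst_sub, Prod.snd_sub] using this
  have hdg : (p.1 - q.1) * g1 + (p.2 - q.2) * g2 = 0 := by
    have h := hfp.1.trans hfp.2.symm
    rw [hfeq p, hfeq q] at h
    linear_combination h
  have hdne : p.1 - q.1 ≠ 0 ∨ p.2 - q.2 ≠ 0 := by
    by_contra hc
    push_neg at hc
    apply hpq
    ext
    · linarith [hc.1]
    · linarith [hc.2]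
  have hT : (u.1 : ℝ) * g1 + (u.2 : ℝ) * g2 = 0 := by
    rcases hdne with h | h
    · have h1 : (p.1 - q.1) * ((u.1:ℝ) * g1 + (u.2:ℝ) * g2) = 0 := by
        linear_combination (u.1:ℝ) * hdg + g2 * hpq'
      exact (mul_eq_zero.1 h1).resolve_left h
    · have h1 : (p.2 - q.2) * ((u.1:ℝ) * g1 + (u.2:ℝ) * g2) = 0 := by
        linear_combination (u.2:ℝ) * hdg - g1 * hpq'
      exact (mul_eq_zero.1 h1).resolve_left h
  -- the functional is proportional to rot u
  have hs : ∃ s : ℝ, s ≠ 0 ∧ g1 = s * (-(u.2 : ℝ)) ∧ g2 = s * (u.1 : ℝ) := by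
    by_cases h : (u.1 : ℝ) = 0
    · have hu2 : (u.2 : ℝ) ≠ 0 := by
        rcases huor with h' | h'
        · exact absurd (by exact_mod_cast h) h'
        · exact Int.cast_ne_zero.2 h'
      have hg2 : g2 = 0 := by
        rw [h] at hT
        have : (u.2:ℝ) * g2 = 0 := by linarith
        exact (mul_eq_zero.1 this).resolve_left hu2
      have hg1 : g1 ≠ 0 := by
        rcases hgne with h' | h'
        · exact h'
        · exact absurd hg2 h'
      exact ⟨g1 / (-(u.2:ℝ)), div_ne_zero hg1 (neg_ne_zero.2 hu2), by field_simp,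
        by rw [hg2, h]; ring⟩
    · have hg2s : g1 = (g2 / (u.1:ℝ)) * (-(u.2:ℝ)) := by
        field_simp
        linear_combination hT
      have hsne : g2 / (u.1:ℝ) ≠ 0 := by
        intro hc
        have hg2 : g2 = 0 := by
          field_simp at hc
          simpa using hc
        rcases hgne with h' | h'
        · rw [hg2s, hg2] at h'
          simp at h'
        · exact h' hg2
      exact ⟨g2 / (u.1:ℝ), hsne, hg2s, by field_simp⟩
  obtain ⟨s, hs0, hsg1, hsg2⟩ := hs
  have hkey : ∀ x : R2, f x = s * dotR x (toR (rotZ u)) := by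
    intro x
    rw [hfeq x, hsg1, hsg2]
    simp only [dotR, toR, rotZ]
    push_cast
    ring
  -- p, q, z at the same (rot u)-level
  have hlevels : dotR p (toR (rotZ u)) = dotR z (toR (rotZ u)) ∧
      dotR q (toR (rotZ u)) = dotR z (toR (rotZ u)) := by
    constructor
    · have h1 := hfp.1
      rw [hkey p, hkey z] at h1
      exact mul_left_cancel₀ hs0 h1
    · have h1 := hfp.2
      rw [hkey q, hkey z] at h1
      exact mul_left_cancel₀ hs0 h1
  rcases lt_or_gt_of_ne hs0 with hneg | hpos
  · -- s < 0 : -rot u is the outer normal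
    have hlev : ∀ x : R2, dotR x (toR (-rotZ u)) = -(dotR x (toR (rotZ u))) := by
      intro x
      rw [toR_neg]
      simp only [dotR, Prod.fst_neg, Prod.snd_neg]
      ring
    have hb' : ∀ x ∈ convexHull ℝ (toR '' K), dotR x (toR (-rotZ u)) ≤ dotR z (toR (-rotZ u)) := by
      intro x hx
      have h1 := hfP x hx
      rw [hkey x, hkey z] at h1
      have h2 : dotR z (toR (rotZ u)) ≤ dotR x (toR (rotZ u)) := by nlinarith
      rw [hlev x, hlev z]
      linarith
    have hpz' : dotR p (toR (-rotZ u)) = dotR z (toR (-rotZ u)) := by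
      rw [hlev p, hlev z, hlevels.1]
    have hqz' : dotR q (toR (-rotZ u)) = dotR z (toR (-rotZ u)) := by
      rw [hlev q, hlev z, hlevels.2]
    exact Or.inr (level_two_points hKfin (primitive_neg (primitive_rotZ hu)) (hEP hp) (hEP hq)
      hpq hb' hpz' hqz')
  · -- s > 0 : rot u is the outer normal
    have hb' : ∀ x ∈ convexHull ℝ (toR '' K), dotR x (toR (rotZ u)) ≤ dotR z (toR (rotZ u)) := by
      intro x hx
      have h1 := hfP x hx
      rw [hkey x, hkey z] at h1
      nlinarith
    exact Or.inl (level_two_points hKfin (primitive_rotZ hu) (hEP hp) (hEP hq) hpq hb'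
      hlevels.1 hlevels.2)

end Aux5
section Aux6
open Set

def goodVec (K : Set Z2) (x : Z2) : Prop := x ∈ normals K ∨ -x ∈ normals K

lemma det_mem_D {K : Set Z2} {x y : Z2} (hx : goodVec K x) (hy : goodVec K y)
    (hxy : detZ x y ≠ 0) : (((detZ x y).natAbs : ℝ≥0∞)) ∈ Dset (normals K) := by
  have hne : (((detZ x y).natAbs : ℝ≥0∞)) ≠ 0 := by
    simp only [ne_eq, Nat.cast_eq_zero, Int.natAbs_eq_zero]
    exact hxy
  rcases hx with hx | hx <;> rcases hy with hy | hy
  · exact ⟨hne, x, hx, y, hy, rfl⟩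
  · exact ⟨hne, x, hx, -y, hy, by rw [detZ_neg_right, Int.natAbs_neg]⟩
  · exact ⟨hne, -x, hx, y, hy, by rw [detZ_neg_left, Int.natAbs_neg]⟩
  · exact ⟨hne, -x, hx, -y, hy, by rw [detZ_neg_left, detZ_neg_right, Int.natAbs_neg, Int.natAbs_neg]⟩

lemma Dset_finite {K : Set Z2} (hKfin : K.Finite) : (Dset (normals K)).Finite := by
  have hN := normals_finite hKfin
  apply Set.Finite.subset ((hN.prod hN).image
    (fun pq : Z2 × Z2 => (((detZ pq.1 pq.2).natAbs : ℝ≥0∞))))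
  rintro d ⟨-, u, hu, v, hv, rfl⟩
  exact ⟨(u, v), ⟨hu, hv⟩, rfl⟩

lemma triple_good {K : Set Z2} (hKfin : K.Finite) (hKspan : spans K) {u v w : Z2}
    (h : (u ∈ normals K ∪ normals (negSet K) ∧ v ∈ normals K ∪ normals (negSet K) ∧
            w ∈ normals K ∪ normals (negSet K)) ∨
          (primitive u ∧ primitive v ∧ primitive w ∧
            parEdgeHull K u ∧ parEdgeHull K v ∧ parEdgeHull K w)) :
    ∃ u' v' w' : Z2, goodVec K u' ∧ goodVec K v' ∧ goodVec K w' ∧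
      detZ u' v' = detZ u v ∧ detZ u' w' = detZ u w ∧ detZ v' w' = detZ v w ∧
      detZ v' u' = detZ v u := by
  rcases h with ⟨hu, hv, hw⟩ | ⟨hpu, hpv, hpw, heu, hev, hew⟩
  · have g : ∀ x : Z2, x ∈ normals K ∪ normals (negSet K) → goodVec K x := by
      rintro x (hx | hx)
      · exact Or.inl hx
      · exact Or.inr (normals_negSet hx)
    exact ⟨u, v, w, g u hu, g v hv, g w hw, rfl, rfl, rfl, rfl⟩
  · exact ⟨rotZ u, rotZ v, rotZ w,
      hull_edge_normal hKfin hKspan hpu heu,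
      hull_edge_normal hKfin hKspan hpv hev,
      hull_edge_normal hKfin hKspan hpw hew,
      detZ_rotZ u v, detZ_rotZ u w, detZ_rotZ v w, detZ_rotZ v u⟩

end Aux6

/-- existence of a positive integer `n` with `δ ≤ n ≤ (m−1)/δ` such that
for mutually nonparallel `u, v, w` from `U(K) ∪ U(−K)` (or primitive vectors parallel to
edges of the convex hull of `K`) one has `n·u = αv + βw` with `1 ≤ |α| ≤ m − 1` and
`1 ≤ |β| ≤ m − 1`. -/
theorem exists_good_multiple
    (K : Set Z2) (hKfin : K.Finite) (hKconv : latticeConvex K) (hKspan : spans K)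
    (hm : discK K ^ 2 + discK K + 1 ≤ mm K) :
    ∃ n : ℕ, 0 < n ∧ discK K ≤ (n : ℝ≥0∞) ∧ (n : ℝ≥0∞) ≤ (mm K - 1) / discK K ∧
      ∀ u v w : Z2,
        ¬ ParallelZ u v → ¬ ParallelZ u w → ¬ ParallelZ v w →
        ((u ∈ normals K ∪ normals (negSet K) ∧ v ∈ normals K ∪ normals (negSet K) ∧
            w ∈ normals K ∪ normals (negSet K)) ∨
          (primitive u ∧ primitive v ∧ primitive w ∧
            parEdgeHull K u ∧ parEdgeHull K v ∧ parEdgeHull K w)) →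
        ∃ α β : ℝ, (n : ℝ) • toR u = α • toR v + β • toR w ∧
          1 ≤ |α| ∧ ENNReal.ofReal |α| ≤ mm K - 1 ∧
          1 ≤ |β| ∧ ENNReal.ofReal |β| ≤ mm K - 1 := by
  classical
  by_cases hDe : Dset (normals K) = ∅
  · -- degenerate case : no two independent normals at all
    have hdisc : discK K = 0 := by
      rw [discK, disc, hDe]
      simp
    have hm2 : (2 : ℝ≥0∞) ≤ mm K := mm_ge_two K
    have hm1 : (1 : ℝ≥0∞) ≤ mm K - 1 :=
      ENNReal.le_sub_of_add_le_right ENNReal.one_ne_top (by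
        rw [one_add_one_eq_two]; exact hm2)
    have hmm0 : mm K - 1 ≠ 0 := by
      intro h
      rw [h] at hm1
      exact (by norm_num : ¬ ((1:ℝ≥0∞) ≤ 0)) hm1
    refine ⟨1, one_pos, by rw [hdisc]; exact zero_le, ?_, ?_⟩
    · rw [hdisc, ENNReal.div_zero hmm0]
      exact le_top
    · intro u v w huv huw hvw htriple
      exfalso
      obtain ⟨u', v', w', hgu, hgv, hgw, h1, h2, h3, h4⟩ := triple_good hKfin hKspan htriple
      have hd : detZ u' v' ≠ 0 := by
        rw [h1]
        exact fun h => huv (parallelZ_iff.2 h)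
      have hmem := det_mem_D hgu hgv hd
      rw [hDe] at hmem
      exact hmem
  · -- main case
    have hDne : (Dset (normals K)).Nonempty := Set.nonempty_iff_ne_empty.2 hDe
    have hDfin := Dset_finite hKfin
    obtain ⟨hane, ua, hua, va, hva, haeq⟩ := hDne.csSup_mem hDfin
    obtain ⟨hbne, ub, hub, vb, hvb, hbeq⟩ := hDne.csInf_mem hDfin
    set a : ℕ := (detZ ua va).natAbs with hadef
    set b : ℕ := (detZ ub vb).natAbs with hbdef
    have ha0 : a ≠ 0 := by
      intro h
      rw [haeq, h] at hane
      exact hane (by norm_num)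
    have hb0 : b ≠ 0 := by
      intro h
      rw [hbeq, h] at hbne
      exact hbne (by norm_num)
    have hba : b ≤ a := by
      have h := sInf_le_sSup (s := Dset (normals K)) hDne
      rw [haeq, hbeq] at h
      exact_mod_cast h
    have hbound : ∀ d ∈ Dset (normals K), ((b : ℝ≥0∞)) ≤ d ∧ d ≤ (a : ℝ≥0∞) := fun d hd =>
      ⟨hbeq ▸ sInf_le hd, haeq ▸ le_sSup hd⟩
    have hdisc : discK K = (a : ℝ≥0∞) / (b : ℝ≥0∞) := by
      rw [discK, disc, haeq, hbeq]
    set n : ℕ := (a + b - 1) / b with hndef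
    -- basic ℕ inequalities for n
    have key1 : a ≤ b * n ∧ n * b ≤ a + b ∧ 0 < n := by
      have h1 : b * n + (a + b - 1) % b = a + b - 1 := by
        rw [hndef]; exact Nat.div_add_mod _ _
      have h2 : (a + b - 1) % b < b := Nat.mod_lt _ (by omega)
      set t := b * n with htdef
      have hcomm : n * b = t := by rw [htdef]; ring
      refine ⟨by omega, by omega, ?_⟩
      rcases Nat.eq_zero_or_pos n with h | h
      · exfalso
        rw [h, mul_zero] at htdef
        omega
      · exact h
    obtain ⟨hk1, hk2, hn0⟩ := key1
    have hb0' : (b : ℝ≥0∞) ≠ 0 := Nat.cast_ne_zero.2 hb0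
    have hbtop : (b : ℝ≥0∞) ≠ ⊤ := ENNReal.natCast_ne_top b
    have hδ0 : (a : ℝ≥0∞) / (b : ℝ≥0∞) ≠ 0 := by
      rw [ne_eq, ENNReal.div_eq_zero_iff]
      push_neg
      exact ⟨Nat.cast_ne_zero.2 ha0, hbtop⟩
    have hδtop : (a : ℝ≥0∞) / (b : ℝ≥0∞) ≠ ⊤ := by
      rw [ne_eq, ENNReal.div_eq_top]
      push_neg
      refine ⟨fun _ => hb0', fun h => absurd h (ENNReal.natCast_ne_top a)⟩
    rw [hdisc] at hm
    -- n * δ ≤ m - 1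
    have hstep1 : (n : ℝ≥0∞) ≤ (a : ℝ≥0∞) / (b : ℝ≥0∞) + 1 := by
      have hds : ((a : ℝ≥0∞) + (b : ℝ≥0∞)) / (b : ℝ≥0∞) = (a : ℝ≥0∞) / (b : ℝ≥0∞) + 1 := by
        rw [ENNReal.add_div, ENNReal.div_self hb0' hbtop]
      rw [← hds, ENNReal.le_div_iff_mul_le (Or.inl hb0') (Or.inl hbtop)]
      exact_mod_cast Nat.cast_le.2 hk2
    have hnd : (n : ℝ≥0∞) * ((a : ℝ≥0∞) / (b : ℝ≥0∞)) ≤ mm K - 1 := by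
      calc (n : ℝ≥0∞) * ((a : ℝ≥0∞) / (b : ℝ≥0∞))
          ≤ ((a : ℝ≥0∞) / (b : ℝ≥0∞) + 1) * ((a : ℝ≥0∞) / (b : ℝ≥0∞)) :=
            mul_le_mul_left hstep1 _
        _ = ((a : ℝ≥0∞) / (b : ℝ≥0∞)) ^ 2 + (a : ℝ≥0∞) / (b : ℝ≥0∞) := by ring
        _ ≤ mm K - 1 := ENNReal.le_sub_of_add_le_right ENNReal.one_ne_top hm
    refine ⟨n, hn0, ?_, ?_, ?_⟩
    · rw [hdisc, ENNReal.div_le_iff_le_mul (Or.inl hb0') (Or.inl hbtop)]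
      have : (a : ℝ≥0∞) ≤ ((n * b : ℕ) : ℝ≥0∞) := Nat.cast_le.2 (by rw [mul_comm]; exact hk1)
      rwa [Nat.cast_mul] at this
    · rw [hdisc]
      exact (ENNReal.le_div_iff_mul_le (Or.inl hδ0) (Or.inl hδtop)).2 hnd
    · intro u v w huv huw hvw htriple
      obtain ⟨u', v', w', hgu, hgv, hgw, h1, h2, h3, h4⟩ := triple_good hKfin hKspan htriple
      have hduv : detZ u v ≠ 0 := fun h => huv (parallelZ_iff.2 h)
      have hduw : detZ u w ≠ 0 := fun h => huw (parallelZ_iff.2 h)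
      have hdvw : detZ v w ≠ 0 := fun h => hvw (parallelZ_iff.2 h)
      have hdvu : detZ v u ≠ 0 := by
        rw [detZ_swap]
        exact neg_ne_zero.2 hduv
      set X : ℕ := (detZ u w).natAbs with hXdef
      set Y : ℕ := (detZ v w).natAbs with hYdef
      set Z : ℕ := (detZ v u).natAbs with hZdef
      have hXD := det_mem_D hgu hgw (by rw [h2]; exact hduw)
      rw [h2] at hXD
      have hYD := det_mem_D hgv hgw (by rw [h3]; exact hdvw)
      rw [h3] at hYD
      have hZD := det_mem_D hgv hgu (by rw [h4]; exact hdvu)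
      rw [h4] at hZD
      obtain ⟨hbX, hXa⟩ := hbound _ hXD
      obtain ⟨hbY, hYa⟩ := hbound _ hYD
      obtain ⟨hbZ, hZa⟩ := hbound _ hZD
      have hbX' : b ≤ X := by exact_mod_cast hbX
      have hXa' : X ≤ a := by exact_mod_cast hXa
      have hbY' : b ≤ Y := by exact_mod_cast hbY
      have hYa' : Y ≤ a := by exact_mod_cast hYa
      have hbZ' : b ≤ Z := by exact_mod_cast hbZ
      have hZa' : Z ≤ a := by exact_mod_cast hZa
      have hY0 : 0 < Y := by omega
      have hYR : (0:ℝ) < (Y : ℝ) := by exact_mod_cast hY0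
      have hvwR : ((detZ v w : ℤ) : ℝ) ≠ 0 := Int.cast_ne_zero.2 hdvw
      set α : ℝ := (n : ℝ) * ((detZ u w : ℤ) : ℝ) / ((detZ v w : ℤ) : ℝ) with hαdef
      set β : ℝ := (n : ℝ) * ((detZ v u : ℤ) : ℝ) / ((detZ v w : ℤ) : ℝ) with hβdef
      have habsα : |α| = (n : ℝ) * (X : ℝ) / (Y : ℝ) := by
        rw [hαdef, abs_div, abs_mul, Nat.abs_cast, hXdef, hYdef, Nat.cast_natAbs,
          Nat.cast_natAbs, Int.cast_abs, Int.cast_abs]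
      have habsβ : |β| = (n : ℝ) * (Z : ℝ) / (Y : ℝ) := by
        rw [hβdef, abs_div, abs_mul, Nat.abs_cast, hZdef, hYdef, Nat.cast_natAbs,
          Nat.cast_natAbs, Int.cast_abs, Int.cast_abs]
      have hYnX : Y ≤ n * X := by
        calc Y ≤ a := hYa'
          _ ≤ b * n := hk1
          _ ≤ X * n := Nat.mul_le_mul_right n hbX'
          _ = n * X := mul_comm _ _
      have hYnZ : Y ≤ n * Z := by
        calc Y ≤ a := hYa'
          _ ≤ b * n := hk1
          _ ≤ Z * n := Nat.mul_le_mul_right n hbZ'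
          _ = n * Z := mul_comm _ _
      have hαlow : 1 ≤ |α| := by
        rw [habsα, le_div_iff₀ hYR, one_mul]
        exact_mod_cast hYnX
      have hβlow : 1 ≤ |β| := by
        rw [habsβ, le_div_iff₀ hYR, one_mul]
        exact_mod_cast hYnZ
      have hup : ∀ W : ℕ, W ≤ a → ENNReal.ofReal ((n : ℝ) * (W : ℝ) / (Y : ℝ)) ≤ mm K - 1 := by
        intro W hWa
        have hcast : (n : ℝ) * (W : ℝ) / (Y : ℝ) = ((n * W : ℕ) : ℝ) / ((Y : ℕ) : ℝ) := by
          push_cast; ring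
        rw [hcast, ENNReal.ofReal_div_of_pos hYR, ENNReal.ofReal_natCast, ENNReal.ofReal_natCast]
        refine le_trans ?_ hnd
        calc ((n * W : ℕ) : ℝ≥0∞) / ((Y : ℕ) : ℝ≥0∞)
            ≤ ((n * a : ℕ) : ℝ≥0∞) / ((b : ℕ) : ℝ≥0∞) :=
              ENNReal.div_le_div (Nat.cast_le.2 (Nat.mul_le_mul_left n hWa)) (Nat.cast_le.2 hbY')
          _ = (n : ℝ≥0∞) * ((a : ℝ≥0∞) / (b : ℝ≥0∞)) := by
              rw [Nat.cast_mul, mul_div_assoc]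
      refine ⟨α, β, ?_, hαlow, habsα ▸ hup X hXa', hβlow, habsβ ▸ hup Z hZa'⟩
      -- the vector identity
      have e1 : (n : ℝ) * (u.1 : ℝ) * ((detZ v w : ℤ) : ℝ)
          = ((n : ℝ) * ((detZ u w : ℤ) : ℝ)) * (v.1 : ℝ)
            + ((n : ℝ) * ((detZ v u : ℤ) : ℝ)) * (w.1 : ℝ) := by
        push_cast [detZ]
        ring
      have e2 : (n : ℝ) * (u.2 : ℝ) * ((detZ v w : ℤ) : ℝ)
          = ((n : ℝ) * ((detZ u w : ℤ) : ℝ)) * (v.2 : ℝ)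
            + ((n : ℝ) * ((detZ v u : ℤ) : ℝ)) * (w.2 : ℝ) := by
        push_cast [detZ]
        ring
      apply Prod.ext
      · simp only [Prod.smul_fst, Prod.fst_add, toR, smul_eq_mul, hαdef, hβdef]
        field_simp
        exact mul_left_cancel₀ (Nat.cast_ne_zero.2 hn0.ne' : (n:ℝ) ≠ 0) (by linear_combination e1)
      · simp only [Prod.smul_snd, Prod.snd_add, toR, smul_eq_mul, hαdef, hβdef]
        field_simp
        exact mul_left_cancel₀ (Nat.cast_ne_zero.2 hn0.ne' : (n:ℝ) ≠ 0) (by linear_combination e2)
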